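/- (Eigencircuits of the maximal direct-cause indicator.) Let d ≥ 2. A process comb J yields the outcome j with probability 1 under the direct-cause indicator with identity unitaries, i.e. (1/d) Tr[J · (I_A ⊗ (|Φ_j⟩⟨Φ_j|)_{BC})] = 1, if and only if J = σ_A ⊗ d|Φ_j⟩⟨Φ_j|_{BC} for some positive semidefinite σ_A with Tr σ_A = 1; in particular every eigencircuit of the direct-cause indicator implements a lossless (unitary) channel from B to C. -/

import Mathlib

open Matrix BigOperators ComplexOrder

noncomputable section

/-- Index type for the three systems A, B, C. -/
abbrev PIdx (dA dB dC : ℕ) := Fin dA × Fin dB × Fin dC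

/-- Matrices on `ℂ^{dA} ⊗ ℂ^{dB} ⊗ ℂ^{dC}`. -/
abbrev PMat (dA dB dC : ℕ) := Matrix (PIdx dA dB dC) (PIdx dA dB dC) ℂ

/-- Partial trace over the third (C) tensor factor. -/
def trC {dA dB dC : ℕ} (M : PMat dA dB dC) :
    Matrix (Fin dA × Fin dB) (Fin dA × Fin dB) ℂ :=
  Matrix.of fun i j => ∑ c : Fin dC, M (i.1, i.2, c) (j.1, j.2, c)

/-- Partial trace over the second tensor factor of a bipartite matrix. -/
def trSnd {d₁ d₂ : ℕ} (M : Matrix (Fin d₁ × Fin d₂) (Fin d₁ × Fin d₂) ℂ) :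
    Matrix (Fin d₁) (Fin d₁) ℂ :=
  Matrix.of fun a a' => ∑ b : Fin d₂, M (a, b) (a', b)

/-- A process comb: a PSD matrix `J` on A ⊗ B ⊗ C with `Tr_C J = ρ_A ⊗ I_B`
for some state `ρ_A`. -/
def IsProcessComb {dA dB dC : ℕ} (J : PMat dA dB dC) : Prop :=
  J.PosSemidef ∧ ∃ ρ : Matrix (Fin dA) (Fin dA) ℂ,
    ρ.PosSemidef ∧ ρ.trace = 1 ∧
    trC J = Matrix.of fun i j => ρ i.1 j.1 * (if i.2 = j.2 then (1 : ℂ) else 0)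

/-- A tester with `m` outcomes: PSD matrices `T x` with `∑ x, T x = Λ ⊗ I_C`
for some PSD `Λ` on A ⊗ B with `Tr_B Λ = I_A`. -/
def IsTester {dA dB dC m : ℕ} (T : Fin m → PMat dA dB dC) : Prop :=
  (∀ x, (T x).PosSemidef) ∧
  ∃ Λ : Matrix (Fin dA × Fin dB) (Fin dA × Fin dB) ℂ,
    Λ.PosSemidef ∧ trSnd Λ = 1 ∧
    (∑ x, T x) = Matrix.of fun i j =>
      Λ (i.1, i.2.1) (j.1, j.2.1) * (if i.2.2 = j.2.2 then (1 : ℂ) else 0)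

/-- Outcome probability `Tr[J T]` (as a real number). -/
def prob {dA dB dC : ℕ} (J T : PMat dA dB dC) : ℝ := ((J * T).trace).re

/-- `P_k`: Bob's optimal winning probability in the quantum roulette with `k` chips,
for the pair of testers `T`, `S`. -/
def rouletteP {dA dB dC m : ℕ} (T S : Fin m → PMat dA dB dC) (k : ℕ) : ℝ :=
  sSup { r : ℝ | ∃ J : PMat dA dB dC, IsProcessComb J ∧
    ∃ G : Finset (Fin 2 × Fin m), G.card = k ∧
      r = ∑ g ∈ G, (1 / 2 : ℝ) * prob J (if g.1 = 0 then T g.2 else S g.2) }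

/-- The roulette vector `w ∈ ℝ^{2m}`, `w_k = P_k - P_{k-1}`. -/
def rouletteW {dA dB dC m : ℕ} (T S : Fin m → PMat dA dB dC) : Fin (m + m) → ℝ :=
  fun k => rouletteP T S (k.1 + 1) - rouletteP T S k.1

/-- Sum of the `k` largest entries of a (nonnegative) vector, padding with zeros. -/
def kMaxSum {n : ℕ} (u : Fin n → ℝ) (k : ℕ) : ℝ :=
  sSup { r : ℝ | ∃ A : Finset (Fin n), A.card = min k n ∧ r = ∑ i ∈ A, u i }

/-- `MajorizedBy u v` means `u ≺ v`: every partial sum of the `k` largest entries of `u`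
is at most that of `v`, and the total sums agree. -/
def MajorizedBy {m n : ℕ} (u : Fin m → ℝ) (v : Fin n → ℝ) : Prop :=
  (∀ k : ℕ, kMaxSum u k ≤ kMaxSum v k) ∧ ∑ i, u i = ∑ i, v i

/-- Base-2 Shannon entropy of a finite vector. -/
def H2 {n : ℕ} (p : Fin n → ℝ) : ℝ := -∑ i, p i * Real.logb 2 (p i)

/-- Rank-one projector `|φ⟩⟨φ|` on a bipartite system. -/
def projMat {d : ℕ} (φ : Fin d × Fin d → ℂ) :
    Matrix (Fin d × Fin d) (Fin d × Fin d) ℂ :=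
  Matrix.of fun x y => φ x * (starRingEnd ℂ) (φ y)

/-- Embed an operator on A ⊗ C as an operator on A ⊗ B ⊗ C acting as the identity on B. -/
def embAC {d : ℕ} (M : Matrix (Fin d × Fin d) (Fin d × Fin d) ℂ) : PMat d d d :=
  Matrix.of fun i j => M (i.1, i.2.2) (j.1, j.2.2) * (if i.2.1 = j.2.1 then (1 : ℂ) else 0)

/-- Embed an operator on B ⊗ C as an operator on A ⊗ B ⊗ C acting as the identity on A. -/
def embBC {d : ℕ} (M : Matrix (Fin d × Fin d) (Fin d × Fin d) ℂ) : PMat d d d :=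
  Matrix.of fun i j => M (i.2.1, i.2.2) (j.2.1, j.2.2) * (if i.1 = j.1 then (1 : ℂ) else 0)

/-- `(U ⊗ V) |φ⟩` for a bipartite vector `φ`. -/
def kronVec {d : ℕ} (U V : Matrix (Fin d) (Fin d) ℂ) (φ : Fin d × Fin d → ℂ) :
    Fin d × Fin d → ℂ :=
  fun x => ∑ y : Fin d × Fin d, U x.1 y.1 * V x.2 y.2 * φ y

/-- An orthonormal basis `{Φ_i}` of `ℂ^d ⊗ ℂ^d` consisting of maximally entangled vectors,
with `Φ_1 = (1/√d) ∑_k |kk⟩`. -/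
def IsMaxEntBasis {d : ℕ} (Φ : Fin (d * d) → Fin d × Fin d → ℂ) : Prop :=
  (∀ i j, ∑ x : Fin d × Fin d, (starRingEnd ℂ) (Φ i x) * Φ j x
      = if i = j then (1 : ℂ) else 0) ∧
  (∀ i a a', ∑ b : Fin d, Φ i (a, b) * (starRingEnd ℂ) (Φ i (a', b))
      = if a = a' then (1 : ℂ) / d else 0) ∧
  (∀ i b b', ∑ a : Fin d, Φ i (a, b) * (starRingEnd ℂ) (Φ i (a, b'))
      = if b = b' then (1 : ℂ) / d else 0) ∧
  ∀ (h : 0 < d * d) (x : Fin d × Fin d),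
    Φ ⟨0, h⟩ x = if x.1 = x.2 then ((1 / Real.sqrt d : ℝ) : ℂ) else 0

/-- Outcome distribution of the common-cause indicator `T_CC(U₁, U₂)` on a process comb:
`p_i = (1/d) Tr[J ((U₁⊗U₂)|Φ_i⟩⟨Φ_i|(U₁⊗U₂)†)_{AC} ⊗ I_B]`. -/
def ccProb {d : ℕ} (U₁ U₂ : Matrix (Fin d) (Fin d) ℂ)
    (Φ : Fin (d * d) → Fin d × Fin d → ℂ) (J : PMat d d d) : Fin (d * d) → ℝ :=
  fun i => (1 / d) * prob J (embAC (projMat (kronVec U₁ U₂ (Φ i))))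

/-- Outcome distribution of the direct-cause indicator `T_DC(U₃, U₄)` on a process comb:
`q_i = (1/d) Tr[J (I_A ⊗ ((U₃⊗U₄)|Φ_i⟩⟨Φ_i|(U₃⊗U₄)†)_{BC})]`. -/
def dcProb {d : ℕ} (U₃ U₄ : Matrix (Fin d) (Fin d) ℂ)
    (Φ : Fin (d * d) → Fin d × Fin d → ℂ) (J : PMat d d d) : Fin (d * d) → ℝ :=
  fun i => (1 / d) * prob J (embBC (projMat (kronVec U₃ U₄ (Φ i))))

/-- The isometry `a ↦ |a⟩ ⊗ |φ⟩` from `A` to `A ⊗ B ⊗ C`, as a matrix. -/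
def Vmat {d : ℕ} (φ : Fin d × Fin d → ℂ) : Matrix (PIdx d d d) (Fin d) ℂ :=
  Matrix.of fun p b => if p.1 = b then φ p.2 else 0

lemma Vmat_sandwich {d : ℕ} (φ : Fin d × Fin d → ℂ) (N : Matrix (Fin d) (Fin d) ℂ) :
    Vmat φ * N * (Vmat φ)ᴴ =
      Matrix.of fun p q => N p.1 q.1 * (φ p.2 * (starRingEnd ℂ) (φ q.2)) := by
  ext p q
  simp only [Matrix.mul_apply, Vmat, Matrix.conjTranspose_apply, Matrix.of_apply,
    ite_mul, mul_ite, zero_mul, mul_zero, Finset.sum_ite_eq, Finset.mem_univ, if_true,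
    Finset.sum_ite_eq, Finset.mem_univ, if_true]
  simp only [apply_ite (star : ℂ → ℂ), star_zero, mul_ite, mul_zero,
    Finset.sum_ite_eq, Finset.mem_univ, if_true, Complex.star_def]
  ring

lemma Vmat_isometry {d : ℕ} (φ : Fin d × Fin d → ℂ)
    (hφ : ∑ x : Fin d × Fin d, (starRingEnd ℂ) (φ x) * φ x = 1) :
    (Vmat φ)ᴴ * Vmat φ = 1 := by
  ext b b'
  simp only [Matrix.mul_apply, Vmat, Matrix.conjTranspose_apply, Matrix.of_apply]
  rw [Fintype.sum_prod_type]
  simp only [apply_ite (star : ℂ → ℂ), star_zero, ite_mul, zero_mul, mul_ite, mul_zero]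
  by_cases h : b = b'
  · subst h
    simp only [Matrix.one_apply_eq]
    rw [← hφ]
    rw [Finset.sum_comm]
    refine Finset.sum_congr rfl fun y _ => ?_
    simp
  · rw [Matrix.one_apply_ne h]
    refine Finset.sum_eq_zero fun a _ => Finset.sum_eq_zero fun y _ => ?_
    by_cases ha : a = b <;> by_cases ha' : a = b' <;> simp_all

lemma psd_trace_zero {n : Type*} [Fintype n] [DecidableEq n] {A : Matrix n n ℂ}
    (hA : A.PosSemidef) (h : A.trace = 0) : A = 0 := by
  obtain ⟨B, rfl⟩ : ∃ B : Matrix n n ℂ, A = Bᴴ * B := by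
    open scoped MatrixOrder in exact CStarAlgebra.nonneg_iff_eq_star_mul_self.mp hA.nonneg
  have h' : ∑ j, ∑ i, star (B i j) * B i j = 0 := by
    simpa [Matrix.trace, Matrix.mul_apply, Matrix.conjTranspose_apply, Matrix.diag] using h
  have hB : B = 0 := by
    ext i j
    have h1 := (Finset.sum_eq_zero_iff_of_nonneg
      (fun j _ => Finset.sum_nonneg fun i _ => star_mul_self_nonneg (B i j))).mp h' j
      (Finset.mem_univ j)
    have h2 := (Finset.sum_eq_zero_iff_of_nonneg
      (fun i _ => star_mul_self_nonneg (B i j))).mp h1 i (Finset.mem_univ i)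
    have := mul_eq_zero.mp h2
    simpa [star_eq_zero] using this.imp_left (fun hz => (star_eq_zero).mp hz)
  simp [hB]

lemma psd_proj_eq {n : Type*} [Fintype n] [DecidableEq n] {J P : Matrix n n ℂ}
    (hJ : J.PosSemidef) (hPH : Pᴴ = P) (hP2 : P * P = P)
    (htr : (J * P).trace = J.trace) : J = P * J * P := by
  obtain ⟨B, hB⟩ : ∃ B : Matrix n n ℂ, J = Bᴴ * B := by
    open scoped MatrixOrder in exact CStarAlgebra.nonneg_iff_eq_star_mul_self.mp hJ.nonneg
  set Q : Matrix n n ℂ := 1 - P with hQ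
  have hQH : Qᴴ = Q := by
    simp [hQ, Matrix.conjTranspose_sub, hPH]
  have hQ2 : Q * Q = Q := by
    simp only [hQ, Matrix.sub_mul, Matrix.mul_sub, Matrix.one_mul, Matrix.mul_one, hP2]
    abel
  have hK : (B * Q)ᴴ * (B * Q) = Q * J * Q := by
    rw [Matrix.conjTranspose_mul, hQH, hB]
    rw [Matrix.mul_assoc, Matrix.mul_assoc, Matrix.mul_assoc]
  have htrK : (Q * J * Q).trace = 0 := by
    rw [Matrix.trace_mul_cycle, hQ2, hQ, Matrix.sub_mul, Matrix.one_mul,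
      Matrix.trace_sub, Matrix.trace_mul_comm P J, htr]
    simp
  have hKpsd : ((B * Q)ᴴ * (B * Q)).PosSemidef := Matrix.posSemidef_conjTranspose_mul_self _
  have hBQ : B * Q = 0 := by
    have := psd_trace_zero hKpsd (by rw [hK]; exact htrK)
    exact Matrix.conjTranspose_mul_self_eq_zero.mp this
  have hJQ : J * Q = 0 := by
    rw [hB, Matrix.mul_assoc, hBQ, Matrix.mul_zero]
  have hQJ : Q * J = 0 := by
    have : (J * Q)ᴴ = 0 := by rw [hJQ]; simp
    rwa [Matrix.conjTranspose_mul, hQH, hJ.isHermitian.eq] at this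
  have hJP : J * P = J := by
    have : J * (1 - P) = 0 := hJQ
    rw [Matrix.mul_sub, Matrix.mul_one, sub_eq_zero] at this
    exact this.symm
  have hPJ : P * J = J := by
    have : (1 - P) * J = 0 := hQJ
    rw [Matrix.sub_mul, Matrix.one_mul, sub_eq_zero] at this
    exact this.symm
  rw [hPJ, hJP]

lemma smul_psd {n : Type*} [Fintype n] {A : Matrix n n ℂ} (hA : A.PosSemidef)
    (c : ℝ) (hc : 0 ≤ c) : ((c : ℂ) • A).PosSemidef := by
  constructor
  · rw [Matrix.IsHermitian, Matrix.conjTranspose_smul, hA.isHermitian.eq]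
    congr 1
    simp
  · intro x
    have hsum : (x.sum fun i xi => x.sum fun j xj => star xi * ((c : ℂ) • A) i j * xj) =
        (c : ℂ) * x.sum fun i xi => x.sum fun j xj => star xi * A i j * xj := by
      simp only [Finsupp.sum, Finset.mul_sum, Matrix.smul_apply, smul_eq_mul]
      exact Finset.sum_congr rfl fun _ _ => Finset.sum_congr rfl fun _ _ => by ring
    rw [hsum]
    exact mul_nonneg (by exact_mod_cast Complex.zero_le_real.mpr hc) (hA.2 x)

/-- eigencircuits of the maximal direct-cause indicator: a process comb
`J` gives outcome `j` with probability one under the direct-cause indicator (with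
identity unitaries) iff `J = σ_A ⊗ d |Φ_j⟩⟨Φ_j|_{BC}` for some state `σ_A`. -/
theorem direct_cause_indicator_eigencircuits {d : ℕ} (hd : 2 ≤ d)
    (Φ : Fin (d * d) → Fin d × Fin d → ℂ) (hΦ : IsMaxEntBasis Φ)
    (j : Fin (d * d)) (J : PMat d d d) (hJ : IsProcessComb J) :
    dcProb 1 1 Φ J j = 1 ↔
      ∃ σ : Matrix (Fin d) (Fin d) ℂ, σ.PosSemidef ∧ σ.trace = 1 ∧
        J = Matrix.of fun p q =>
          σ p.1 q.1 * ((d : ℂ) * projMat (Φ j) (p.2.1, p.2.2) (q.2.1, q.2.2)) := by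
  obtain ⟨hpsd, ρ, hρpsd, hρtr, hρeq⟩ := hJ
  have hdpos : 0 < d := lt_of_lt_of_le (by norm_num) hd
  have hd0 : (d : ℝ) ≠ 0 := Nat.cast_ne_zero.mpr hdpos.ne'
  have hd0' : (d : ℂ) ≠ 0 := Nat.cast_ne_zero.mpr hdpos.ne'
  set φ : Fin d × Fin d → ℂ := Φ j with hφdef
  have hnorm : ∑ x : Fin d × Fin d, (starRingEnd ℂ) (φ x) * φ x = 1 := by
    simpa using hΦ.1 j j
  have hkron : kronVec (1 : Matrix (Fin d) (Fin d) ℂ) 1 φ = φ := by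
    funext x
    simp only [kronVec, Matrix.one_apply]
    rw [Fintype.sum_prod_type]
    simp [Finset.sum_ite_eq, ite_mul, one_mul, zero_mul]
  set V : Matrix (PIdx d d d) (Fin d) ℂ := Vmat φ with hVdef
  have hV1 : Vᴴ * V = 1 := Vmat_isometry φ hnorm
  have hPi : embBC (projMat φ) = V * Vᴴ := by
    have h := Vmat_sandwich φ 1
    rw [Matrix.mul_one] at h
    rw [h]
    ext p q
    simp only [embBC, projMat, Matrix.of_apply, Matrix.one_apply]
    by_cases hpq : p.1 = q.1 <;> simp [hpq]
  have hPiH : (V * Vᴴ)ᴴ = V * Vᴴ := by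
    rw [Matrix.conjTranspose_mul, Matrix.conjTranspose_conjTranspose]
  have hPi2 : (V * Vᴴ) * (V * Vᴴ) = V * Vᴴ := by
    simp only [Matrix.mul_assoc]
    rw [← Matrix.mul_assoc Vᴴ V Vᴴ, hV1, Matrix.one_mul]
  have htrJ : J.trace = (d : ℂ) := by
    have h1 : ∀ a b, (∑ c, J (a, b, c) (a, b, c)) = ρ a a := by
      intro a b
      have := congrFun (congrFun hρeq (a, b)) (a, b)
      simpa [trC] using this
    calc J.trace = ∑ a, ∑ b, ∑ c, J (a, b, c) (a, b, c) := by
          simp [Matrix.trace, Matrix.diag, Fintype.sum_prod_type]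
      _ = ∑ a : Fin d, ∑ _b : Fin d, ρ a a := by
          refine Finset.sum_congr rfl fun a _ => Finset.sum_congr rfl fun b _ => h1 a b
      _ = ∑ a : Fin d, (d : ℂ) * ρ a a := by
          simp [Finset.sum_const, Fintype.card_fin, nsmul_eq_mul]
      _ = (d : ℂ) * ρ.trace := by rw [← Finset.mul_sum]; rfl
      _ = (d : ℂ) := by rw [hρtr, mul_one]
  constructor
  · intro hq
    simp only [dcProb, prob, ← hφdef, hkron, hPi] at hq
    set t : ℂ := (J * (V * Vᴴ)).trace with htdef
    have htre : t.re = (d : ℝ) := by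
      field_simp at hq
      linarith [hq]
    have htconj : (starRingEnd ℂ) t = t := by
      have h1 : (starRingEnd ℂ) t = ((J * (V * Vᴴ))ᴴ).trace :=
        (Matrix.trace_conjTranspose _).symm
      rw [Matrix.conjTranspose_mul, hPiH, hpsd.isHermitian.eq, Matrix.trace_mul_comm] at h1
      exact h1
    have ht : t = (d : ℂ) := by
      apply Complex.ext
      · simpa using htre
      · simpa using Complex.conj_eq_iff_im.mp htconj
    have htr_eq : (J * (V * Vᴴ)).trace = J.trace := by rw [← htdef, ht, htrJ]
    have hJeq := psd_proj_eq hpsd hPiH hPi2 htr_eq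
    have hJ2 : J = V * (Vᴴ * J * V) * Vᴴ := by
      conv_lhs => rw [hJeq]
      simp only [Matrix.mul_assoc]
    set M : Matrix (Fin d) (Fin d) ℂ := Vᴴ * J * V with hMdef
    have hMpsd : M.PosSemidef := hpsd.conjTranspose_mul_mul_same V
    have htrM : M.trace = (d : ℂ) := by
      have h2 : (V * M * Vᴴ).trace = M.trace := by
        rw [Matrix.trace_mul_cycle, hV1, Matrix.one_mul]
      rw [← h2, ← hJ2, htrJ]
    refine ⟨(((d : ℝ)⁻¹ : ℝ) : ℂ) • M, smul_psd hMpsd _ (by positivity), ?_, ?_⟩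
    · rw [Matrix.trace_smul, htrM]
      push_cast
      simp only [smul_eq_mul]
      field_simp
    · rw [hJ2, Vmat_sandwich]
      ext p q
      simp only [Matrix.of_apply, Matrix.smul_apply, smul_eq_mul]
      have : projMat (Φ j) (p.2.1, p.2.2) (q.2.1, q.2.2) = φ p.2 * (starRingEnd ℂ) (φ q.2) := by
        simp [projMat, hφdef]
      rw [this]
      push_cast
      field_simp
  · rintro ⟨σ, hσpsd, hσtr, rfl⟩
    have hJeq : (Matrix.of fun p q =>
        σ p.1 q.1 * ((d : ℂ) * projMat (Φ j) (p.2.1, p.2.2) (q.2.1, q.2.2))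
        : PMat d d d) = V * ((d : ℂ) • σ) * Vᴴ := by
      rw [Vmat_sandwich]
      ext p q
      simp only [Matrix.of_apply, Matrix.smul_apply, smul_eq_mul]
      have : projMat (Φ j) (p.2.1, p.2.2) (q.2.1, q.2.2) = φ p.2 * (starRingEnd ℂ) (φ q.2) := by
        simp [projMat, hφdef]
      rw [this]
      ring
    rw [← hφdef] at hJeq
    simp only [dcProb, prob, ← hφdef, hkron, hPi, hJeq]
    have hmul : (V * ((d : ℂ) • σ) * Vᴴ) * (V * Vᴴ) = V * ((d : ℂ) • σ) * Vᴴ := by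
      simp only [Matrix.mul_assoc]
      rw [← Matrix.mul_assoc Vᴴ V Vᴴ, hV1, Matrix.one_mul]
    rw [hmul]
    have htr : (V * ((d : ℂ) • σ) * Vᴴ).trace = (d : ℂ) := by
      rw [Matrix.trace_mul_cycle, hV1, Matrix.one_mul, Matrix.trace_smul, hσtr]
      simp
    rw [htr]
    simp [hd0]
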